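/- Let P be the null-hypothesis measure and suppose the risk-free interest rate is 0. Let an investigator's portfolio value be |K_t| = K_t^{free} + K_t^{risky} + K_t^{deriv}, where K_t^{free} is constant between rebalancings, K_t^{risky} is a predictable number of shares times a nonnegative P-martingale, and K_t^{deriv} is the value of a derivative contract priced at its risk-neutral price, so that E_P[K_t^{deriv} | K_1,…,K_{t-1}] = K_{t-1}^{deriv}. Assume |K_0| = 1 and that trading (shorting, loans, purchasing or issuing derivative contracts) is constrained so that the probability of negative portfolio value is 0. Then |K_t| is a nonnegative martingale under P with |K_0| = 1, and for every α ∈ (0,1), P(∃ t ∈ ℕ such that |K_t| ≥ 1/α) ≤ α; i.e., rejecting when |K_t| ≥ 1/α is an anytime-valid level-α sequential test. -/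

import Mathlib

open MeasureTheory Filter
open scoped NNReal ENNReal
set_option maxHeartbeats 1000000 in
set_option synthInstance.maxHeartbeats 200000 in

/-- Portfolio with derivative contracts. Let `M` be a nonnegative martingale
under the null measure `μ` (risky test wealth process) and `P` the price process of a
derivative contract priced at its risk-neutral price, so that `P` is a `μ`-martingale
(`E[P (t+1) | ℱ t] = P t`, the risk-neutral measure being indistinguishable from the null
and the rate 0). The investigator holds predictable positions `S` (risky shares) and `H`
(derivative contracts), and cash `F`; rebalancing conserves total value. If the initial
value is 1 and trading is constrained so that the portfolio value
`V t = F t + S t * M t + H t * P t` is nonnegative a.s. (probability of negative wealth is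
0), then `V` is a nonnegative martingale with `V 0 = 1` and, by Ville's inequality,
`μ(∃ t, V t ≥ 1/α) ≤ α` for every `α ∈ (0,1)`: rejecting when `V t ≥ 1/α` is an
anytime-valid level-`α` sequential test. -/
theorem derivative_portfolio_ville {Ω : Type*} {m0 : MeasurableSpace Ω}
    (μ : Measure Ω) [IsProbabilityMeasure μ] (ℱ : Filtration ℕ m0)
    (M P S H F : ℕ → Ω → ℝ)
    (hM : Martingale M ℱ μ) (hMpos : ∀ t ω, 0 ≤ M t ω)
    (hPadapted : Adapted ℱ P) (hPint : ∀ t, Integrable (P t) μ)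
    (hPmart : ∀ t, μ[P (t + 1) | ℱ t] =ᵐ[μ] P t)
    (hSadapted : Adapted ℱ S) (hSpred : ∀ t, StronglyMeasurable[ℱ t] (S (t + 1)))
    (hHadapted : Adapted ℱ H) (hHpred : ∀ t, StronglyMeasurable[ℱ t] (H (t + 1)))
    (hFadapted : Adapted ℱ F)
    (hrebal : ∀ t ω, F (t + 1) ω + S (t + 1) ω * M t ω + H (t + 1) ω * P t ω
      = F t ω + S t ω * M t ω + H t ω * P t ω)
    (hV0 : ∀ᵐ ω ∂μ, F 0 ω + S 0 ω * M 0 ω + H 0 ω * P 0 ω = 1)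
    (hVpos : ∀ t, ∀ᵐ ω ∂μ, 0 ≤ F t ω + S t ω * M t ω + H t ω * P t ω)
    (hFint : ∀ t, Integrable (F t) μ)
    (hSMint : ∀ t, Integrable (fun ω => S t ω * M t ω) μ)
    (hHPint : ∀ t, Integrable (fun ω => H t ω * P t ω) μ) :
    Martingale (fun t ω => F t ω + S t ω * M t ω + H t ω * P t ω) ℱ μ ∧
    (∀ᵐ ω ∂μ, F 0 ω + S 0 ω * M 0 ω + H 0 ω * P 0 ω = 1) ∧
    (∀ t, ∀ᵐ ω ∂μ, 0 ≤ F t ω + S t ω * M t ω + H t ω * P t ω) ∧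
    (∀ α : ℝ, α ∈ Set.Ioo (0:ℝ) 1 →
      μ {ω | ∃ t : ℕ, 1/α ≤ F t ω + S t ω * M t ω + H t ω * P t ω}
        ≤ ENNReal.ofReal α) := by

  classical
  set V : ℕ → Ω → ℝ := fun t ω => F t ω + S t ω * M t ω + H t ω * P t ω with hVdef
  -- `F (t+1)` is `ℱ t`-measurable thanks to the rebalancing identity
  have hFpred : ∀ t, StronglyMeasurable[ℱ t] (F (t + 1)) := by
    intro t
    have heq : F (t + 1) = fun ω => F t ω + S t ω * M t ω + H t ω * P t ω
        - S (t + 1) ω * M t ω - H (t + 1) ω * P t ω := by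
      funext ω
      have := hrebal t ω
      linarith
    rw [heq]
    exact (((((hFadapted t).stronglyMeasurable).add (((hSadapted t).stronglyMeasurable).mul (hM.stronglyAdapted t))).add
      (((hHadapted t).stronglyMeasurable).mul ((hPadapted t).stronglyMeasurable))).sub
      ((hSpred t).mul (hM.stronglyAdapted t))).sub ((hHpred t).mul ((hPadapted t).stronglyMeasurable))
  have hVadapted : Adapted ℱ V := fun t =>
    ((hFadapted t).add ((hSadapted t).mul (hM.stronglyAdapted t).measurable)).add
      ((hHadapted t).mul (hPadapted t))
  have hVint : ∀ t, Integrable (V t) μ := fun t =>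
    ((hFint t).add (hSMint t)).add (hHPint t)
  have hVmart : Martingale V ℱ μ := by
    refine martingale_nat (fun t => (hVadapted t).stronglyMeasurable) hVint fun t => ?_
    have h1 : μ[F (t + 1) | ℱ t] = F (t + 1) :=
      condExp_of_stronglyMeasurable (ℱ.le t) (hFpred t) (hFint (t + 1))
    have h2 : μ[(fun ω => S (t + 1) ω * M (t + 1) ω) | ℱ t]
        =ᵐ[μ] fun ω => S (t + 1) ω * M t ω := by
      have hmul := condExp_mul_of_stronglyMeasurable_left (m := ℱ t) (μ := μ)
        (f := S (t + 1)) (g := M (t + 1)) (hSpred t) (hSMint (t + 1))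
        (hM.integrable (t + 1))
      have hm : μ[M (t + 1) | ℱ t] =ᵐ[μ] M t := hM.condExp_ae_eq t.le_succ
      filter_upwards [hmul, hm] with ω hω hmω
      calc (μ[(fun ω => S (t + 1) ω * M (t + 1) ω) | ℱ t]) ω
          = S (t + 1) ω * (μ[M (t + 1) | ℱ t]) ω := hω
        _ = S (t + 1) ω * M t ω := by rw [hmω]
    have h3 : μ[(fun ω => H (t + 1) ω * P (t + 1) ω) | ℱ t]
        =ᵐ[μ] fun ω => H (t + 1) ω * P t ω := by
      have hmul := condExp_mul_of_stronglyMeasurable_left (m := ℱ t) (μ := μ)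
        (f := H (t + 1)) (g := P (t + 1)) (hHpred t) (hHPint (t + 1))
        (hPint (t + 1))
      filter_upwards [hmul, hPmart t] with ω hω hpω
      calc (μ[(fun ω => H (t + 1) ω * P (t + 1) ω) | ℱ t]) ω
          = H (t + 1) ω * (μ[P (t + 1) | ℱ t]) ω := hω
        _ = H (t + 1) ω * P t ω := by rw [hpω]
    have hadd1 : μ[V (t + 1) | ℱ t] =ᵐ[μ]
        μ[(fun ω => F (t + 1) ω + S (t + 1) ω * M (t + 1) ω) | ℱ t]
          + μ[(fun ω => H (t + 1) ω * P (t + 1) ω) | ℱ t] :=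
      condExp_add ((hFint (t + 1)).add (hSMint (t + 1))) (hHPint (t + 1)) _
    have hadd2 : μ[(fun ω => F (t + 1) ω + S (t + 1) ω * M (t + 1) ω) | ℱ t] =ᵐ[μ]
        μ[F (t + 1) | ℱ t] + μ[(fun ω => S (t + 1) ω * M (t + 1) ω) | ℱ t] :=
      condExp_add (hFint (t + 1)) (hSMint (t + 1)) _
    refine EventuallyEq.symm ?_
    filter_upwards [hadd1, hadd2, h2, h3] with ω hω1 hω2 hω2' hω3
    have : (μ[V (t + 1) | ℱ t]) ω
        = F (t + 1) ω + S (t + 1) ω * M t ω + H (t + 1) ω * P t ω := by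
      rw [hω1]
      simp only [Pi.add_apply]
      rw [hω2]
      simp only [Pi.add_apply]
      rw [h1, hω2', hω3]
    rw [this, hrebal t ω]
  refine ⟨hVmart, hV0, hVpos, ?_⟩
  intro α hα
  obtain ⟨hα0, hα1⟩ := hα
  -- positive part of V : a nonnegative submartingale equal a.e. to V
  have hsub : Submartingale (V⁺) ℱ μ := hVmart.submartingale.pos
  have hnonneg : (0 : ℕ → Ω → ℝ) ≤ V⁺ := fun t ω => le_max_right _ _
  set ε : NNReal := Real.toNNReal (1 / α) with hε
  have hεcoe : (ε : ℝ) = 1 / α := Real.coe_toNNReal _ (by positivity)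
  have hεE : (ε : ℝ≥0∞) = (ENNReal.ofReal α)⁻¹ := by
    rw [ENNReal.coe_nnreal_eq, hεcoe, one_div, ENNReal.ofReal_inv_of_pos hα0]
  -- expectation of V t equals 1
  have hEV : ∀ t, ∫ ω, V t ω ∂μ = 1 := by
    intro t
    have h0 : ∫ ω, V 0 ω ∂μ = 1 := by
      rw [integral_congr_ae hV0]
      simp
    have := hVmart.condExp_ae_eq (Nat.zero_le t)
    calc ∫ ω, V t ω ∂μ = ∫ ω, (μ[V t | ℱ 0]) ω ∂μ := (integral_condExp (ℱ.le 0)).symm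
      _ = ∫ ω, V 0 ω ∂μ := integral_congr_ae this
      _ = 1 := h0
  have hEVp : ∀ t, ∫ ω, (V⁺) t ω ∂μ = 1 := by
    intro t
    rw [← hEV t]
    refine integral_congr_ae ?_
    filter_upwards [hVpos t] with ω hω
    simpa [Pi.posPart_apply, posPart_eq_self] using hω
  -- the finite-horizon maximal sets
  set A : ℕ → Set Ω := fun n => {ω | (ε : ℝ) ≤
    (Finset.range (n + 1)).sup' Finset.nonempty_range_add_one fun k => (V⁺) k ω} with hA
  have hAbound : ∀ n, μ (A n) ≤ ENNReal.ofReal α := by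
    intro n
    have hmax := maximal_ineq hsub hnonneg (ε := ε) n
    have hset : ENNReal.ofReal (∫ ω in A n, (V⁺) n ω ∂μ) ≤ ENNReal.ofReal 1 := by
      refine ENNReal.ofReal_le_ofReal ?_
      rw [← hEVp n]
      refine setIntegral_le_integral (hsub.integrable n) ?_
      · exact Eventually.of_forall fun ω => hnonneg n ω
    have h1 : (ε : ℝ≥0∞) * μ (A n) ≤ 1 := by
      calc (ε : ℝ≥0∞) * μ (A n) ≤ ENNReal.ofReal (∫ ω in A n, (V⁺) n ω ∂μ) := hmax
        _ ≤ ENNReal.ofReal 1 := hset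
        _ = 1 := ENNReal.ofReal_one
    rw [hεE] at h1
    have hαne : ENNReal.ofReal α ≠ 0 := by
      simp [ENNReal.ofReal_eq_zero, not_le, hα0]
    calc μ (A n) = ENNReal.ofReal α * ((ENNReal.ofReal α)⁻¹ * μ (A n)) := by
          rw [← mul_assoc, ENNReal.mul_inv_cancel hαne ENNReal.ofReal_ne_top, one_mul]
      _ ≤ ENNReal.ofReal α * 1 := by exact mul_le_mul_right h1 _
      _ = ENNReal.ofReal α := mul_one _
  -- monotonicity of the sets A n
  have hAmono : Monotone A := by
    intro n m hnm ω hω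
    simp only [hA, Set.mem_setOf_eq] at hω ⊢
    refine le_trans hω ?_
    exact Finset.sup'_mono _ (Finset.range_subset_range.2 (by omega)) Finset.nonempty_range_add_one
  have hsubset : {ω | ∃ t : ℕ, 1 / α ≤ V t ω} ⊆ ⋃ n, A n := by
    intro ω ⟨t, ht⟩
    refine Set.mem_iUnion.2 ⟨t, ?_⟩
    have h1 : (ε : ℝ) ≤ (V⁺) t ω := by
      rw [hεcoe]
      exact le_trans ht (le_max_left _ _)
    exact le_trans h1 (Finset.le_sup' (fun k => (V⁺) k ω) (Finset.self_mem_range_succ t))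
  calc μ {ω | ∃ t : ℕ, 1 / α ≤ V t ω} ≤ μ (⋃ n, A n) := measure_mono hsubset
    _ = ⨆ n, μ (A n) := hAmono.directed_le.measure_iUnion
    _ ≤ ENNReal.ofReal α := iSup_le hAbound
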